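/- arXiv:1109.1128 — 8 statements merged into one kernel-verified Lean document; each statement's English description precedes it below -/
import Mathlib

section
/- Let R>0 and Γ>0. If h > h₂ := (Γ/(4π))·log(2R), then Ẽ_h(x,y) > 0 for every (x,y) ∈ ℝ² ∖ {(0,2R)}. -/
open Real

/-- `b(x,y) := 2R²·(x² + (y−2R)²)/(4R² + x² + y²)`. -/
noncomputable def bfun (R x y : ℝ) : ℝ :=
  2 * R ^ 2 * (x ^ 2 + (y - 2 * R) ^ 2) / (4 * R ^ 2 + x ^ 2 + y ^ 2)

/-- `Ẽ_h(x,y) := h − (Γ/(8π))·log(b(x,y))`. -/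
noncomputable def Etilde (R Γ h x y : ℝ) : ℝ :=
  h - Γ / (8 * π) * Real.log (bfun R x y)

/-- if `h > h₂ := (Γ/(4π))·log(2R)` then `Ẽ_h > 0` on `ℝ² ∖ {(0,2R)}`. -/
theorem Etilde_pos_of_energy_gt (R Γ h : ℝ) (hR : 0 < R) (hΓ : 0 < Γ)
    (hh : h > Γ / (4 * π) * Real.log (2 * R)) :
    ∀ x y : ℝ, (x, y) ≠ ((0 : ℝ), 2 * R) → 0 < Etilde R Γ h x y := by
  intro x y hne
  have hπ := Real.pi_pos
  have hD : 0 < 4 * R ^ 2 + x ^ 2 + y ^ 2 := by positivity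
  have hN : 0 < x ^ 2 + (y - 2 * R) ^ 2 := by
    rcases eq_or_ne x 0 with hx | hx
    · have hy : y ≠ 2 * R := by intro h'; exact hne (by simp [hx, h'])
      have hy' : y - 2 * R ≠ 0 := sub_ne_zero.mpr hy
      positivity
    · positivity
  have hb : 0 < bfun R x y := by unfold bfun; positivity
  have hle : bfun R x y ≤ (2 * R) ^ 2 := by
    rw [bfun, div_le_iff₀ hD]
    nlinarith [sq_nonneg (y + 2 * R)]
  have hlog : Real.log (bfun R x y) ≤ 2 * Real.log (2 * R) := by
    calc Real.log (bfun R x y) ≤ Real.log ((2 * R) ^ 2) := Real.log_le_log hb hle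
      _ = 2 * Real.log (2 * R) := by rw [Real.log_pow]; push_cast; ring
  have hmul : Γ / (8 * π) * Real.log (bfun R x y)
      ≤ Γ / (8 * π) * (2 * Real.log (2 * R)) := by
    apply mul_le_mul_of_nonneg_left hlog
    positivity
  have heq : Γ / (8 * π) * (2 * Real.log (2 * R)) = Γ / (4 * π) * Real.log (2 * R) := by
    field_simp; ring
  unfold Etilde
  linarith
end

section
/- Let R>0 and Γ>0. For every h with h₁ < h < h₂ there exists an open disk D ⊂ {(x,y) ∈ ℝ² : y < 0} containing the point (0,−2R), such that Ẽ_h(x,y) < 0 for (x,y) ∈ D, Ẽ_h(x,y) = 0 for (x,y) on the boundary circle of D, and Ẽ_h(x,y) > 0 for every (x,y) outside the closure of D. -/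
open Real

set_option maxHeartbeats 1600000 in
/-- for `h₁ < h < h₂` there is an open disk `D` contained in the lower
half-plane `{y < 0}` and containing `(0,−2R)` on which `Ẽ_h < 0`, with `Ẽ_h = 0` on its
boundary circle and `Ẽ_h > 0` outside its closure (on the domain `ℝ² ∖ {(0,2R)}`). -/
theorem Etilde_sign_of_energy_between (R Γ h : ℝ) (hR : 0 < R) (hΓ : 0 < Γ)
    (hh1 : Γ / (8 * π) * Real.log (2 * R ^ 2) < h)
    (hh2 : h < Γ / (4 * π) * Real.log (2 * R)) :
    ∃ c₁ c₂ ρ : ℝ, 0 < ρ ∧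
      (∀ x y : ℝ, (x - c₁) ^ 2 + (y - c₂) ^ 2 < ρ ^ 2 → y < 0) ∧
      ((0 - c₁) ^ 2 + (-(2 * R) - c₂) ^ 2 < ρ ^ 2) ∧
      (∀ x y : ℝ, (x - c₁) ^ 2 + (y - c₂) ^ 2 < ρ ^ 2 → Etilde R Γ h x y < 0) ∧
      (∀ x y : ℝ, (x - c₁) ^ 2 + (y - c₂) ^ 2 = ρ ^ 2 → Etilde R Γ h x y = 0) ∧
      (∀ x y : ℝ, ρ ^ 2 < (x - c₁) ^ 2 + (y - c₂) ^ 2 → (x, y) ≠ ((0 : ℝ), 2 * R) →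
        0 < Etilde R Γ h x y) := by
  have hπ : 0 < π := Real.pi_pos
  have hk : 0 < Γ / (8 * π) := by positivity
  set β := Real.exp (8 * π * h / Γ) with hβdef
  have hβpos : 0 < β := Real.exp_pos _
  have hβ1 : 2 * R ^ 2 < β := by
    have h2R2 : (0:ℝ) < 2 * R ^ 2 := by positivity
    have hlog : Real.log (2 * R ^ 2) < 8 * π * h / Γ := by
      rw [lt_div_iff₀ hΓ]
      nlinarith [mul_lt_mul_of_pos_left hh1 (by positivity : (0:ℝ) < 8 * π),
        (by field_simp : 8 * π * (Γ / (8 * π) * Real.log (2 * R ^ 2))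
          = Real.log (2 * R ^ 2) * Γ)]
    calc 2 * R ^ 2 = Real.exp (Real.log (2 * R ^ 2)) := (Real.exp_log h2R2).symm
      _ < β := Real.exp_lt_exp.mpr hlog
  have hβ2 : β < 4 * R ^ 2 := by
    have h4R2 : (0:ℝ) < 4 * R ^ 2 := by positivity
    have hlog : 8 * π * h / Γ < Real.log (4 * R ^ 2) := by
      have hl : Real.log (4 * R ^ 2) = 2 * Real.log (2 * R) := by
        rw [show (4:ℝ) * R ^ 2 = (2 * R) ^ 2 by ring, Real.log_pow]
        push_cast; ring
      rw [hl, div_lt_iff₀ hΓ]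
      nlinarith [mul_lt_mul_of_pos_left hh2 (by positivity : (0:ℝ) < 4 * π),
        (by field_simp : 4 * π * (Γ / (4 * π) * Real.log (2 * R))
          = Real.log (2 * R) * Γ)]
    calc β < Real.exp (Real.log (4 * R ^ 2)) := Real.exp_lt_exp.mpr hlog
      _ = 4 * R ^ 2 := Real.exp_log h4R2
  have hzero : h - Γ / (8 * π) * Real.log β = 0 := by
    rw [hβdef, Real.log_exp]
    field_simp
    ring
  clear_value β
  clear hβdef
  set t := β - 2 * R ^ 2 with htdef
  have ht : 0 < t := by rw [htdef]; linarith
  have ht2 : t < 2 * R ^ 2 := by rw [htdef]; linarith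
  have hβeq : β = t + 2 * R ^ 2 := by rw [htdef]; ring
  clear_value t
  clear htdef
  have ht0 : t ≠ 0 := ne_of_gt ht
  set c₂ := -(4 * R ^ 3) / t with hc2def
  have hc2neg : c₂ < 0 := by
    rw [hc2def, neg_div]
    have : 0 < 4 * R ^ 3 / t := by positivity
    linarith
  have hc2t : c₂ * t = -(4 * R ^ 3) := by rw [hc2def]; field_simp
  clear_value c₂
  clear hc2def
  have h4t : 0 < 4 * R ^ 4 - t ^ 2 := by nlinarith
  set ρ := 2 * R / t * Real.sqrt (4 * R ^ 4 - t ^ 2) with hρdef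
  have hρpos : 0 < ρ := by
    have hs : 0 < Real.sqrt (4 * R ^ 4 - t ^ 2) := Real.sqrt_pos.mpr h4t
    have : 0 < 2 * R / t := by positivity
    exact mul_pos this hs
  have hρsq : ρ ^ 2 = 4 * R ^ 2 * (4 * R ^ 4 - t ^ 2) / t ^ 2 := by
    rw [hρdef, mul_pow, Real.sq_sqrt h4t.le, div_pow]
    ring
  clear_value ρ
  clear hρdef
  have hρt : ρ ^ 2 * t ^ 2 = 4 * R ^ 2 * (4 * R ^ 4 - t ^ 2) := by
    rw [hρsq]; field_simp
  have hD : ∀ x y : ℝ, 0 < 4 * R ^ 2 + x ^ 2 + y ^ 2 := fun x y => by positivity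
  have key : ∀ x y : ℝ, 2 * R ^ 2 * (x ^ 2 + (y - 2 * R) ^ 2)
      - β * (4 * R ^ 2 + x ^ 2 + y ^ 2)
      = t * (ρ ^ 2 - ((x - 0) ^ 2 + (y - c₂) ^ 2)) := by
    intro x y
    have e1 : (y - c₂) ^ 2 * t ^ 2 = (y * t - c₂ * t) ^ 2 := by ring
    rw [hβeq]
    have : (2 * R ^ 2 * (x ^ 2 + (y - 2 * R) ^ 2)
        - (t + 2 * R ^ 2) * (4 * R ^ 2 + x ^ 2 + y ^ 2)) * t ^ 2
        = t * (ρ ^ 2 - ((x - 0) ^ 2 + (y - c₂) ^ 2)) * t ^ 2 := by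
      have e2 : t * (ρ ^ 2 - ((x - 0) ^ 2 + (y - c₂) ^ 2)) * t ^ 2
          = t * (ρ ^ 2 * t ^ 2 - (x - 0) ^ 2 * t ^ 2 - (y * t - c₂ * t) ^ 2) := by
        rw [← e1]; ring
      rw [e2, hρt, hc2t]; ring
    have htt : (t:ℝ) ^ 2 ≠ 0 := pow_ne_zero 2 ht0
    exact mul_right_cancel₀ htt this
  have hbsub : ∀ x y : ℝ, bfun R x y - β
      = t * (ρ ^ 2 - ((x - 0) ^ 2 + (y - c₂) ^ 2)) / (4 * R ^ 2 + x ^ 2 + y ^ 2) := by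
    intro x y
    rw [← key x y, bfun, div_sub' (ne_of_gt (hD x y))]
    ring_nf
  refine ⟨0, c₂, ρ, hρpos, ?_, ?_, ?_, ?_, ?_⟩
  · -- disk in lower half plane
    intro x y hxy
    by_contra hy
    push_neg at hy
    have htt : 0 < t ^ 2 := by positivity
    have e2 : (y - c₂) ^ 2 * t ^ 2 = (y * t + 4 * R ^ 3) ^ 2 := by
      rw [show (y - c₂) ^ 2 * t ^ 2 = (y * t - c₂ * t) ^ 2 from by ring, hc2t]; ring
    nlinarith [mul_lt_mul_of_pos_right hxy htt, hρt, e2,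
      mul_nonneg (mul_nonneg (by positivity : (0:ℝ) ≤ 8 * R ^ 3) hy) ht.le,
      sq_nonneg (x * t), sq_nonneg (y * t),
      mul_pos (mul_pos (by positivity : (0:ℝ) < 4 * R ^ 2) ht) ht]
  · -- contains (0, -2R)
    have htt : 0 < t ^ 2 := by positivity
    have e3 : (-(2 * R) - c₂) ^ 2 * t ^ 2 = (4 * R ^ 3 - 2 * R * t) ^ 2 := by
      rw [show (-(2 * R) - c₂) ^ 2 * t ^ 2 = (-(2 * R) * t - c₂ * t) ^ 2 from by ring,
        hc2t]; ring
    have h2 : (-(2 * R) - c₂) ^ 2 * t ^ 2 < ρ ^ 2 * t ^ 2 := by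
      nlinarith [e3, hρt, mul_pos (mul_pos (mul_pos hR hR) ht)
        (by linarith : (0:ℝ) < 2 * R ^ 2 - t)]
    have h3 : (-(2 * R) - c₂) ^ 2 < ρ ^ 2 := lt_of_mul_lt_mul_right (by linarith) htt.le
    nlinarith [h3]
  · -- negative inside
    intro x y hxy
    have hnum : 0 < t * (ρ ^ 2 - ((x - 0) ^ 2 + (y - c₂) ^ 2)) :=
      mul_pos ht (by linarith)
    have hbgt : β < bfun R x y := by
      have hs := hbsub x y
      have : 0 < bfun R x y - β := by
        rw [hs]; exact div_pos hnum (hD x y)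
      linarith
    have hlog : Real.log β < Real.log (bfun R x y) := Real.log_lt_log hβpos hbgt
    have := mul_lt_mul_of_pos_left hlog hk
    rw [Etilde]
    linarith
  · -- zero on boundary
    intro x y hxy
    have h0 : ρ ^ 2 - ((x - 0) ^ 2 + (y - c₂) ^ 2) = 0 := by linarith
    have hb : bfun R x y = β := by
      have hs := hbsub x y
      rw [h0] at hs
      simp at hs
      linarith
    rw [Etilde, hb]
    exact hzero
  · -- positive outside
    intro x y hxy hne
    have hN : 0 < x ^ 2 + (y - 2 * R) ^ 2 := by
      by_contra hc
      push_neg at hc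
      have hx2 : x ^ 2 = 0 :=
        le_antisymm (by nlinarith [sq_nonneg (y - 2 * R)]) (sq_nonneg x)
      have hy2 : (y - 2 * R) ^ 2 = 0 :=
        le_antisymm (by nlinarith [sq_nonneg x]) (sq_nonneg (y - 2 * R))
      have hx0 : x = 0 := by
        have := pow_eq_zero_iff (n := 2) (by norm_num) |>.mp hx2
        exact this
      have hy0 : y = 2 * R := by
        have := pow_eq_zero_iff (n := 2) (by norm_num) |>.mp hy2
        linarith
      exact hne (by rw [hx0, hy0])
    have hbpos : 0 < bfun R x y := by
      rw [bfun]
      exact div_pos (mul_pos (by positivity) hN) (hD x y)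
    have hnum : t * (ρ ^ 2 - ((x - 0) ^ 2 + (y - c₂) ^ 2)) < 0 :=
      mul_neg_of_pos_of_neg ht (by linarith)
    have hblt : bfun R x y < β := by
      have hs := hbsub x y
      have : bfun R x y - β < 0 := by
        rw [hs]; exact div_neg_of_neg_of_pos hnum (hD x y)
      linarith
    have hlog : Real.log (bfun R x y) < Real.log β := Real.log_lt_log hbpos hblt
    have := mul_lt_mul_of_pos_left hlog hk
    rw [Etilde]
    linarith
end

section
/- Let R>0 and Γ>0. For every h < h₁ there exists an open disk D ⊂ {(x,y) ∈ ℝ² : y > 0} containing the point (0,2R), such that Ẽ_h(x,y) > 0 for (x,y) ∈ D ∖ {(0,2R)}, Ẽ_h(x,y) = 0 for (x,y) on the boundary circle of D, and Ẽ_h(x,y) < 0 for every (x,y) outside the closure of D. -/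
set_option maxHeartbeats 1000000


open Real

/-- for `h < h₁ := (Γ/(8π))·log(2R²)` there is an open disk `D` contained in
the upper half-plane `{y > 0}` and containing the vortex `(0,2R)`, with `Ẽ_h > 0` on
`D ∖ {(0,2R)}`, `Ẽ_h = 0` on its boundary circle and `Ẽ_h < 0` outside its closure. -/
theorem Etilde_sign_of_energy_below (R Γ h : ℝ) (hR : 0 < R) (hΓ : 0 < Γ)
    (hh : h < Γ / (8 * π) * Real.log (2 * R ^ 2)) :
    ∃ c₁ c₂ ρ : ℝ, 0 < ρ ∧
      (∀ x y : ℝ, (x - c₁) ^ 2 + (y - c₂) ^ 2 < ρ ^ 2 → 0 < y) ∧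
      ((0 - c₁) ^ 2 + (2 * R - c₂) ^ 2 < ρ ^ 2) ∧
      (∀ x y : ℝ, (x - c₁) ^ 2 + (y - c₂) ^ 2 < ρ ^ 2 → (x, y) ≠ ((0 : ℝ), 2 * R) →
        0 < Etilde R Γ h x y) ∧
      (∀ x y : ℝ, (x - c₁) ^ 2 + (y - c₂) ^ 2 = ρ ^ 2 → Etilde R Γ h x y = 0) ∧
      (∀ x y : ℝ, ρ ^ 2 < (x - c₁) ^ 2 + (y - c₂) ^ 2 → Etilde R Γ h x y < 0) := by
  have hπ := Real.pi_pos
  obtain ⟨k, hk0, hklt, hhk⟩ : ∃ k : ℝ, 0 < k ∧ k < 2 * R ^ 2 ∧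
      h = Γ / (8 * π) * Real.log k := by
    refine ⟨Real.exp (8 * π * h / Γ), Real.exp_pos _, ?_, ?_⟩
    · have h1 : 8 * π * h / Γ < Real.log (2 * R ^ 2) := by
        rw [div_lt_iff₀ hΓ]
        have e : 8 * π * (Γ / (8 * π) * Real.log (2 * R ^ 2)) =
            Real.log (2 * R ^ 2) * Γ := by field_simp
        nlinarith [mul_lt_mul_of_pos_left hh (show (0:ℝ) < 8 * π by positivity)]
      calc Real.exp (8 * π * h / Γ) < Real.exp (Real.log (2 * R ^ 2)) :=
            Real.exp_lt_exp.mpr h1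
      _ = 2 * R ^ 2 := Real.exp_log (by positivity)
    · rw [Real.log_exp]; field_simp
  obtain ⟨s, hs, hseq⟩ : ∃ s : ℝ, 0 < s ∧ s = 2 * R ^ 2 - k :=
    ⟨2 * R ^ 2 - k, by linarith, rfl⟩
  obtain ⟨c₂, hc2eq, hc2⟩ : ∃ c₂ : ℝ, c₂ * s = 4 * R ^ 3 ∧ 2 * R < c₂ := by
    refine ⟨4 * R ^ 3 / s, by field_simp, ?_⟩
    rw [lt_div_iff₀ hs]
    nlinarith
  have hc2pos : 0 < c₂ := by linarith
  obtain ⟨ρ, hρpos, hρ2⟩ : ∃ ρ : ℝ, 0 < ρ ∧ ρ ^ 2 = c₂ ^ 2 - 4 * R ^ 2 := by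
    refine ⟨Real.sqrt (c₂ ^ 2 - 4 * R ^ 2), Real.sqrt_pos.mpr (by nlinarith), ?_⟩
    exact Real.sq_sqrt (by nlinarith)
  have hρltc : ρ < c₂ := by nlinarith
  -- key algebraic identity
  have key : ∀ x y : ℝ, 2 * R ^ 2 * (x ^ 2 + (y - 2 * R) ^ 2)
      - k * (4 * R ^ 2 + x ^ 2 + y ^ 2)
      = s * ((x - 0) ^ 2 + (y - c₂) ^ 2 - ρ ^ 2) := by
    intro x y
    linear_combination (-(x ^ 2 + y ^ 2) - 4 * R ^ 2) * hseq + 2 * y * hc2eq + s * hρ2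
  have hden : ∀ x y : ℝ, 0 < 4 * R ^ 2 + x ^ 2 + y ^ 2 := by
    intro x y; positivity
  have hEt : ∀ x y : ℝ, Etilde R Γ h x y
      = Γ / (8 * π) * (Real.log k - Real.log (bfun R x y)) := by
    intro x y
    rw [Etilde, hhk]; ring
  have hΓπ : 0 < Γ / (8 * π) := by positivity
  refine ⟨0, c₂, ρ, hρpos, ?_, ?_, ?_, ?_, ?_⟩
  · intro x y hxy
    have : (y - c₂) ^ 2 < ρ ^ 2 := by nlinarith [sq_nonneg (x - 0)]
    nlinarith
  · nlinarith
  · intro x y hxy hne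
    have hnum : 0 < x ^ 2 + (y - 2 * R) ^ 2 := by
      by_contra hc
      push_neg at hc
      have hx : x = 0 := by nlinarith [sq_nonneg x, sq_nonneg (y - 2 * R)]
      have hy : y = 2 * R := by nlinarith [sq_nonneg x, sq_nonneg (y - 2 * R)]
      exact hne (by simp [hx, hy])
    have hb0 : 0 < bfun R x y := by
      rw [bfun]; positivity
    have hbk : bfun R x y < k := by
      rw [bfun, div_lt_iff₀ (hden x y)]
      have h1 := key x y
      have h2 : s * ((x - 0) ^ 2 + (y - c₂) ^ 2 - ρ ^ 2) < 0 :=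
        mul_neg_of_pos_of_neg hs (by linarith)
      linarith
    have hlog : Real.log (bfun R x y) < Real.log k := Real.log_lt_log hb0 hbk
    rw [hEt]
    have h3 : 0 < Real.log k - Real.log (bfun R x y) := by linarith
    positivity
  · intro x y hxy
    have hbk : bfun R x y = k := by
      rw [bfun, div_eq_iff (ne_of_gt (hden x y))]
      have h1 := key x y
      rw [hxy] at h1
      linarith [h1]
    rw [hEt, hbk]
    ring
  · intro x y hxy
    have hbk : k < bfun R x y := by
      rw [bfun, lt_div_iff₀ (hden x y)]
      have h1 := key x y
      have h2 : 0 < s * ((x - 0) ^ 2 + (y - c₂) ^ 2 - ρ ^ 2) :=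
        mul_pos hs (by linarith)
      linarith
    have hlog : Real.log k < Real.log (bfun R x y) := Real.log_lt_log hk0 hbk
    rw [hEt]
    have h3 : Real.log k - Real.log (bfun R x y) < 0 := by linarith
    exact mul_neg_of_pos_of_neg hΓπ h3
end

section
/- Let R>0 and let δ ∈ (0, 4R²) with δ ≠ 2R². Then the level set {(x,y) ∈ ℝ² : b(x,y) = δ} is exactly the circle of center (0, 4R³/(2R²−δ)) and radius (2R/|2R²−δ|)·√(δ·(4R²−δ)); equivalently, it is the set of points satisfying x² + y² − (8R³/(2R²−δ))·y + 4R² = 0. -/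
open Real

/-- for `δ ∈ (0,4R²)`, `δ ≠ 2R²`, the level set `{b = δ}` is the circle of
center `(0, 4R³/(2R²−δ))` and radius `(2R/|2R²−δ|)·√(δ(4R²−δ))`; equivalently it is the
set of solutions of `x² + y² − (8R³/(2R²−δ))y + 4R² = 0`. -/
theorem level_set_of_b_is_circle (R δ : ℝ) (hR : 0 < R)
    (hδ : δ ∈ Set.Ioo 0 (4 * R ^ 2)) (hδ' : δ ≠ 2 * R ^ 2) :
    ∀ x y : ℝ,
      (bfun R x y = δ ↔
        x ^ 2 + (y - 4 * R ^ 3 / (2 * R ^ 2 - δ)) ^ 2 =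
          (2 * R / |2 * R ^ 2 - δ| * Real.sqrt (δ * (4 * R ^ 2 - δ))) ^ 2) ∧
      (bfun R x y = δ ↔
        x ^ 2 + y ^ 2 - 8 * R ^ 3 / (2 * R ^ 2 - δ) * y + 4 * R ^ 2 = 0) := by
  obtain ⟨hδ0, hδ4⟩ := hδ
  intro x y
  have hc : 2 * R ^ 2 - δ ≠ 0 := sub_ne_zero.mpr (Ne.symm hδ')
  have hD : (0:ℝ) < 4 * R ^ 2 + x ^ 2 + y ^ 2 := by positivity
  have hs : Real.sqrt (δ * (4 * R ^ 2 - δ)) ^ 2 = δ * (4 * R ^ 2 - δ) :=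
    Real.sq_sqrt (by nlinarith)
  have habs : |2 * R ^ 2 - δ| ^ 2 = (2 * R ^ 2 - δ) ^ 2 := sq_abs _
  have habs0 : |2 * R ^ 2 - δ| ≠ 0 := abs_ne_zero.mpr hc
  have hc2 : R ^ 2 * 2 - δ ≠ 0 := by rwa [mul_comm]
  have key : bfun R x y = δ ↔
      (2 * R ^ 2 - δ) * (x ^ 2 + y ^ 2) - 8 * R ^ 3 * y + 4 * R ^ 2 * (2 * R ^ 2 - δ) = 0 := by
    unfold bfun
    rw [div_eq_iff hD.ne']
    constructor <;> intro h <;> linear_combination h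
  constructor
  · rw [key, mul_pow, div_pow, habs, hs]
    constructor <;> intro h
    · field_simp
      linear_combination (2 * R ^ 2 - δ) * h
    · field_simp at h
      apply mul_left_cancel₀ hc
      linear_combination h
  · rw [key]
    rw [div_mul_eq_mul_div]
    constructor <;> intro h
    · field_simp
      linear_combination h
    · have h' := h
      field_simp at h'
      linear_combination h'
end

section
/- Let R>0. Then, uniformly with respect to α ∈ ℝ, r³·e^{−1/r²}·(∂_x b)(φ₁(r)cos α, φ₁(r)sin α + 2R) / b(φ₁(r)cos α, φ₁(r)sin α + 2R) → 0 as r → 0⁺, and likewise with ∂_x b replaced by ∂_y b; hence the time-rescaled McGehee vector field extends continuously by 0 to the collision manifold {r = 0}. -/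
open Real

noncomputable def phi1 (r : ℝ) : ℝ := r * Real.exp (-1 / r ^ 2)

lemma deriv_bfun_x (R x y : ℝ) (hD : 4 * R ^ 2 + x ^ 2 + y ^ 2 ≠ 0) :
    deriv (fun t => bfun R t y) x =
      (2 * R ^ 2 * (2 * x) * (4 * R ^ 2 + x ^ 2 + y ^ 2)
        - 2 * R ^ 2 * (x ^ 2 + (y - 2 * R) ^ 2) * (2 * x)) /
      (4 * R ^ 2 + x ^ 2 + y ^ 2) ^ 2 := by
  have h1 : HasDerivAt (fun t : ℝ => 2 * R ^ 2 * (t ^ 2 + (y - 2 * R) ^ 2))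
      (2 * R ^ 2 * (2 * x)) x := by
    have := ((hasDerivAt_pow 2 x).add_const ((y - 2 * R) ^ 2)).const_mul (2 * R ^ 2)
    simpa using this
  have h2 : HasDerivAt (fun t : ℝ => 4 * R ^ 2 + t ^ 2 + y ^ 2) (2 * x) x := by
    have := (((hasDerivAt_pow 2 x).const_add (4 * R ^ 2)).add_const (y ^ 2))
    simpa using this
  have := (h1.div h2 hD).deriv
  simpa [bfun, mul_comm, Pi.div_def] using this

lemma deriv_bfun_y (R x y : ℝ) (hD : 4 * R ^ 2 + x ^ 2 + y ^ 2 ≠ 0) :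
    deriv (fun t => bfun R x t) y =
      (2 * R ^ 2 * (2 * (y - 2 * R)) * (4 * R ^ 2 + x ^ 2 + y ^ 2)
        - 2 * R ^ 2 * (x ^ 2 + (y - 2 * R) ^ 2) * (2 * y)) /
      (4 * R ^ 2 + x ^ 2 + y ^ 2) ^ 2 := by
  have h1 : HasDerivAt (fun t : ℝ => 2 * R ^ 2 * (x ^ 2 + (t - 2 * R) ^ 2))
      (2 * R ^ 2 * (2 * (y - 2 * R))) y := by
    have h0 : HasDerivAt (fun t : ℝ => (t - 2 * R) ^ 2) (2 * (y - 2 * R)) y := by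
      have := ((hasDerivAt_id y).sub_const (2 * R)).pow 2
      simpa [Pi.pow_def] using this
    have := (h0.const_add (x ^ 2)).const_mul (2 * R ^ 2)
    simpa using this
  have h2 : HasDerivAt (fun t : ℝ => 4 * R ^ 2 + x ^ 2 + t ^ 2) (2 * y) y := by
    have := (hasDerivAt_pow 2 y).const_add (4 * R ^ 2 + x ^ 2)
    have h' : HasDerivAt (fun t : ℝ => 4 * R ^ 2 + x ^ 2 + t ^ 2) ((2:ℕ) * y ^ 1) y := by
      simpa [add_assoc] using this
    simpa using h'
  have := (h1.div h2 hD).deriv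
  simpa [bfun, mul_comm, Pi.div_def] using this

set_option maxHeartbeats 1600000 in
/-- uniformly in `α`, as `r → 0⁺`,
`r³·e^{−1/r²}·(∂ₓb)/b → 0` and `r³·e^{−1/r²}·(∂_y b)/b → 0` evaluated at the McGehee
point `(x,y) = (φ₁(r)cos α, φ₁(r)sin α + 2R)`; hence the time-rescaled McGehee vector
field extends continuously by `0` to the collision manifold `{r = 0}`. -/
theorem rescaled_gradient_term_vanishes_at_collision (R : ℝ) (hR : 0 < R) :
    ∀ ε > (0 : ℝ), ∃ δ > (0 : ℝ), ∀ r : ℝ, 0 < r → r < δ → ∀ α : ℝ,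
      |r ^ 3 * Real.exp (-1 / r ^ 2) *
          deriv (fun t => bfun R t (phi1 r * Real.sin α + 2 * R)) (phi1 r * Real.cos α) /
          bfun R (phi1 r * Real.cos α) (phi1 r * Real.sin α + 2 * R)| < ε ∧
      |r ^ 3 * Real.exp (-1 / r ^ 2) *
          deriv (fun t => bfun R (phi1 r * Real.cos α) t) (phi1 r * Real.sin α + 2 * R) /
          bfun R (phi1 r * Real.cos α) (phi1 r * Real.sin α + 2 * R)| < ε := by
  intro ε hε
  set C : ℝ := 2 * (1 + 2 * R) / R + 2 * (1 + (1 + 2 * R) / (4 * R ^ 2)) with hC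
  have hCpos : 0 < C := by positivity
  refine ⟨min 1 (ε / C), by positivity, ?_⟩
  intro r hr hrδ α
  have hr1 : r < 1 := lt_of_lt_of_le hrδ (min_le_left _ _)
  have hrC : r < ε / C := lt_of_lt_of_le hrδ (min_le_right _ _)
  set e := Real.exp (-1 / r ^ 2) with he
  have hepos : 0 < e := Real.exp_pos _
  have hele : e ≤ 1 := by
    rw [he]
    apply Real.exp_le_one_iff.mpr
    have h2 : (0:ℝ) < r ^ 2 := by positivity
    rw [neg_div]
    simp [div_nonneg, h2.le]
  set φ := phi1 r with hφ
  have hφpos : 0 < φ := by rw [hφ, phi1]; positivity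
  have hφr : φ ≤ r := by rw [hφ, phi1]; nlinarith [hele, hepos]
  set c := Real.cos α
  set s := Real.sin α
  set x := φ * c with hx
  set y := φ * s + 2 * R with hy
  have hpyth : s ^ 2 + c ^ 2 = 1 := Real.sin_sq_add_cos_sq α
  have hc1 : |c| ≤ 1 := Real.abs_cos_le_one α
  have hs1 : |s| ≤ 1 := Real.abs_sin_le_one α
  set D := 4 * R ^ 2 + x ^ 2 + y ^ 2 with hD
  have hDge : 4 * R ^ 2 ≤ D := by
    rw [hD]; nlinarith [sq_nonneg x, sq_nonneg y]
  have hDpos : 0 < D := by nlinarith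
  have hDne : D ≠ 0 := ne_of_gt hDpos
  have hsum : x ^ 2 + (y - 2 * R) ^ 2 = φ ^ 2 := by
    rw [hx, hy]; linear_combination (φ ^ 2) * hpyth
  have hDφ : D = φ ^ 2 + 4 * R * y := by
    rw [hD, hx, hy]; linear_combination (φ ^ 2) * hpyth
  have hys : y - 2 * R = φ * s := by rw [hy]; ring
  have hbpos : 0 < bfun R x y := by rw [bfun, hsum]; positivity
  have hbne : bfun R x y ≠ 0 := ne_of_gt hbpos
  have hr3 : r ^ 3 * e = r ^ 2 * φ := by rw [hφ, phi1]; ring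
  have hyabs : |y| ≤ 1 + 2 * R := by
    rw [hy]
    calc |φ * s + 2 * R| ≤ |φ * s| + |2 * R| := abs_add_le _ _
    _ ≤ 1 + 2 * R := by
        rw [abs_mul, abs_of_pos hφpos, abs_of_pos (by positivity : (0:ℝ) < 2 * R)]
        nlinarith [hs1, abs_nonneg s, hφr.trans hr1.le]
  have hφ1 : φ ≤ 1 := hφr.trans hr1.le
  have hφne : φ ≠ 0 := ne_of_gt hφpos
  have hRne : R ≠ 0 := ne_of_gt hR
  clear_value C e φ c s x y D
  -- closed forms for the derivatives
  have hdx : deriv (fun t => bfun R t y) x = 16 * R ^ 3 * x * y / D ^ 2 := by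
    rw [deriv_bfun_x R x y (by rw [← hD]; exact hDne), ← hD, hsum]
    congr 1
    linear_combination (4 * R ^ 2 * x) * hDφ
  have hdy : deriv (fun t => bfun R x t) y = 4 * R ^ 2 * φ * (s * D - φ * y) / D ^ 2 := by
    rw [deriv_bfun_y R x y (by rw [← hD]; exact hDne), ← hD, hsum]
    congr 1
    linear_combination (4 * R ^ 2 * D) * hys
  have hEx : r ^ 3 * e * deriv (fun t => bfun R t y) x / bfun R x y
      = 8 * R * r ^ 2 * c * y / D := by
    rw [hdx, hr3, bfun, ← hD, hsum, hx]
    field_simp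
    ring
  have hEy : r ^ 3 * e * deriv (fun t => bfun R x t) y / bfun R x y
      = 2 * r ^ 2 * (s * D - φ * y) / D := by
    rw [hdy, hr3, bfun, ← hD, hsum]
    field_simp
    ring
  have hCr : C * r < ε := by
    rw [lt_div_iff₀ hCpos] at hrC
    calc C * r = r * C := mul_comm C r
    _ < ε := hrC
  have hr2r : r ^ 2 ≤ r := by
    have h := mul_le_mul_of_nonneg_left hr1.le hr.le
    calc r ^ 2 = r * r := sq r
    _ ≤ r * 1 := h
    _ = r := mul_one r
  constructor
  · rw [hEx]
    clear hEx hEy hdx hdy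
    have h1 : |8 * R * r ^ 2 * c * y / D| ≤ 8 * R * r ^ 2 * (1 + 2 * R) / (4 * R ^ 2) := by
      rw [abs_div, abs_of_pos hDpos]
      have hnum : |8 * R * r ^ 2 * c * y| = 8 * R * r ^ 2 * |c| * |y| := by
        rw [abs_mul, abs_mul, abs_of_nonneg (by positivity : (0:ℝ) ≤ 8 * R * r ^ 2)]
      rw [hnum]
      apply div_le_div₀ (by positivity) ?_ (by positivity) hDge
      rw [mul_assoc]
      have hcy : |c| * |y| ≤ 1 + 2 * R := by
        calc |c| * |y| ≤ 1 * (1 + 2 * R) :=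
              mul_le_mul hc1 hyabs (abs_nonneg y) zero_le_one
        _ = 1 + 2 * R := one_mul _
      exact mul_le_mul_of_nonneg_left hcy (by positivity)
    have h2 : 8 * R * r ^ 2 * (1 + 2 * R) / (4 * R ^ 2) = 2 * (1 + 2 * R) / R * r ^ 2 := by
      field_simp; ring
    calc |8 * R * r ^ 2 * c * y / D| ≤ 2 * (1 + 2 * R) / R * r ^ 2 := by rw [← h2]; exact h1
    _ ≤ C * r ^ 2 := by
        have hA : (0:ℝ) ≤ 2 * (1 + (1 + 2 * R) / (4 * R ^ 2)) * r ^ 2 := by positivity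
        rw [hC]; nlinarith [hA]
    _ ≤ C * r := mul_le_mul_of_nonneg_left hr2r hCpos.le
    _ < ε := hCr
  · rw [hEy]
    clear hEx hEy hdx hdy
    have hnum : |2 * r ^ 2 * (s * D - φ * y)| ≤ 2 * r ^ 2 * (D + (1 + 2 * R)) := by
      rw [abs_mul, abs_of_nonneg (by positivity : (0:ℝ) ≤ 2 * r ^ 2)]
      have h3 : |s * D - φ * y| ≤ |s * D| + |φ * y| := abs_sub _ _
      have h4 : |s * D| = |s| * D := by rw [abs_mul, abs_of_pos hDpos]
      have h5 : |φ * y| = φ * |y| := by rw [abs_mul, abs_of_pos hφpos]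
      have h6 : 0 ≤ 2 * r ^ 2 := by positivity
      have h7 : |s| * D ≤ D := by nlinarith [abs_nonneg s]
      have h8 : φ * |y| ≤ 1 + 2 * R := by nlinarith [abs_nonneg y]
      nlinarith
    calc |2 * r ^ 2 * (s * D - φ * y) / D|
        = |2 * r ^ 2 * (s * D - φ * y)| / D := by rw [abs_div, abs_of_pos hDpos]
    _ ≤ 2 * r ^ 2 * (D + (1 + 2 * R)) / D := (div_le_div_iff_of_pos_right hDpos).mpr hnum
    _ = 2 * r ^ 2 + 2 * r ^ 2 * (1 + 2 * R) / D := by field_simp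
    _ ≤ 2 * r ^ 2 + 2 * r ^ 2 * (1 + 2 * R) / (4 * R ^ 2) := by gcongr
    _ = 2 * (1 + (1 + 2 * R) / (4 * R ^ 2)) * r ^ 2 := by field_simp
    _ ≤ C * r ^ 2 := by
        have hA : (0:ℝ) ≤ 2 * (1 + 2 * R) / R * r ^ 2 := by positivity
        rw [hC]; nlinarith [hA]
    _ ≤ C * r := mul_le_mul_of_nonneg_left hr2r hCpos.le
    _ < ε := hCr
end

section
/- Let Γ>0 and ψ₀ ∈ ℝ, and let α : ℝ → ℝ be differentiable with α'(σ) = (Γ/(4π))·sin(ψ₀ − α(σ)) for all σ and ψ₀ − π < α(0) < ψ₀. Then ψ₀ − π < α(σ) < ψ₀ for all σ ∈ ℝ, α is strictly increasing, lim_{σ→+∞} α(σ) = ψ₀ and lim_{σ→−∞} α(σ) = ψ₀ − π. Hence every non-equilibrium orbit on the total collision manifold is a heteroclinic connection from the equilibrium (ψ₀ − π, ψ₀) ∈ 𝒫₂ to the equilibrium (ψ₀, ψ₀) ∈ 𝒫₁, and the flow on the collision manifold is totally degenerate. -/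
open Real Filter

private lemma hetero_aux (c ψ₀ : ℝ) (hc : 0 < c) (t₀ : ℝ) (ht₀ : 0 < t₀) (σ : ℝ) :
    HasDerivAt (fun σ : ℝ => ψ₀ - 2 * Real.arctan (t₀ * Real.exp (-(c * σ))))
      (c * Real.sin (ψ₀ - (ψ₀ - 2 * Real.arctan (t₀ * Real.exp (-(c * σ)))))) σ := by
  set u : ℝ := t₀ * Real.exp (-(c * σ)) with hu
  have hus : 0 < 1 + u ^ 2 := by positivity
  have hder : HasDerivAt (fun σ : ℝ => ψ₀ - 2 * Real.arctan (t₀ * Real.exp (-(c * σ))))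
      (-(2 * (1 / (1 + u ^ 2) * (t₀ * (Real.exp (-(c * σ)) * -c))))) σ := by
    have h1 : HasDerivAt (fun σ : ℝ => t₀ * Real.exp (-(c * σ)))
        (t₀ * (Real.exp (-(c * σ)) * -c)) σ := by
      have := ((hasDerivAt_id σ).const_mul c).neg.exp
      simpa using this.const_mul t₀
    have h2 := ((hasDerivAt_arctan u).comp σ h1).const_mul 2
    simpa using (h2.const_sub ψ₀)
  convert hder using 1
  have hsin : Real.sin (2 * Real.arctan u) = 2 * u / (1 + u ^ 2) := by
    rw [Real.sin_two_mul, Real.sin_arctan, Real.cos_arctan]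
    have hs : Real.sqrt (1 + u ^ 2) ≠ 0 := by positivity
    field_simp
    rw [Real.sq_sqrt hus.le]
  have : ψ₀ - (ψ₀ - 2 * Real.arctan u) = 2 * Real.arctan u := by ring
  rw [this, hsin]
  field_simp
  ring

/-- on the collision manifold, with `ψ ≡ ψ₀` constant, any solution of
`α' = (Γ/(4π))·sin(ψ₀ − α)` with `ψ₀ − π < α(0) < ψ₀` stays in `(ψ₀ − π, ψ₀)` for all
times, is strictly increasing, tends to `ψ₀` as `σ → +∞` and to `ψ₀ − π` as `σ → −∞`.
Hence every non-equilibrium orbit on the total collision manifold is a heteroclinic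
connection from the equilibrium `(ψ₀ − π, ψ₀) ∈ 𝒫₂` to `(ψ₀, ψ₀) ∈ 𝒫₁`, and the flow on
the collision manifold is totally degenerate. -/
theorem collision_manifold_heteroclinic (Γ ψ₀ : ℝ) (hΓ : 0 < Γ) (α : ℝ → ℝ)
    (hα : Differentiable ℝ α)
    (hode : ∀ σ : ℝ, deriv α σ = Γ / (4 * π) * Real.sin (ψ₀ - α σ))
    (h0 : ψ₀ - π < α 0) (h0' : α 0 < ψ₀) :
    (∀ σ : ℝ, ψ₀ - π < α σ ∧ α σ < ψ₀) ∧
    StrictMono α ∧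
    Tendsto α atTop (nhds ψ₀) ∧
    Tendsto α atBot (nhds (ψ₀ - π)) := by
  set c : ℝ := Γ / (4 * π) with hcdef
  have hc : 0 < c := div_pos hΓ (by positivity)
  set t₀ : ℝ := Real.tan ((ψ₀ - α 0) / 2) with ht₀def
  have hang1 : 0 < (ψ₀ - α 0) / 2 := by linarith
  have hang2 : (ψ₀ - α 0) / 2 < π / 2 := by linarith
  have ht₀ : 0 < t₀ := Real.tan_pos_of_pos_of_lt_pi_div_two hang1 hang2
  set g : ℝ → ℝ := fun σ => ψ₀ - 2 * Real.arctan (t₀ * Real.exp (-(c * σ))) with hgdef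
  -- g 0 = α 0
  have hg0 : g 0 = α 0 := by
    simp only [hgdef, mul_zero, neg_zero, Real.exp_zero, mul_one, ht₀def]
    rw [Real.arctan_tan (by linarith) hang2]
    ring
  -- derivative of g
  have hg' : ∀ σ, HasDerivAt g (c * Real.sin (ψ₀ - g σ)) σ := fun σ =>
    hetero_aux c ψ₀ hc t₀ ht₀ σ
  -- uniqueness: α = g
  have heq : ∀ σ, α σ = g σ := by
    intro σ
    have hv : ∀ t : ℝ, LipschitzOnWith c.toNNReal
        (fun x : ℝ => c * Real.sin (ψ₀ - x)) (Set.univ : Set ℝ) := by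
      intro t
      apply LipschitzWith.lipschitzOnWith
      apply lipschitzWith_of_nnnorm_deriv_le
      · exact (Real.differentiable_sin.comp ((differentiable_id).const_sub ψ₀)).const_mul c
      · intro x
        have hd : HasDerivAt (fun x : ℝ => c * Real.sin (ψ₀ - x))
            (c * (-Real.cos (ψ₀ - x))) x := by
          have h1 : HasDerivAt (fun x : ℝ => ψ₀ - x) (-1) x := by
            simpa using (hasDerivAt_id x).const_sub ψ₀
          have := (Real.hasDerivAt_sin (ψ₀ - x)).comp x h1
          simpa [mul_comm] using this.const_mul c
        rw [hd.deriv]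
        rw [← NNReal.coe_le_coe]
        simp only [coe_nnnorm, Real.norm_eq_abs, Real.coe_toNNReal', abs_mul, abs_neg]
        calc |c| * |Real.cos (ψ₀ - x)| ≤ |c| * 1 :=
              mul_le_mul_of_nonneg_left (Real.abs_cos_le_one _) (abs_nonneg c)
          _ = c := by rw [mul_one, abs_of_pos hc]
          _ ≤ max c 0 := le_max_left _ _
    have key : Set.EqOn α g (Set.Icc (-(|σ| + 1)) (|σ| + 1)) := by
      apply ODE_solution_unique_of_mem_Icc (v := fun _ x => c * Real.sin (ψ₀ - x))
        (s := fun _ => Set.univ) (t₀ := 0) (fun t _ => hv t)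
      · constructor <;> [linarith [abs_nonneg σ]; linarith [abs_nonneg σ]]
      · exact hα.continuous.continuousOn
      · intro t _
        have := (hα t).hasDerivAt
        rw [hode t] at this
        exact this
      · intro t _; trivial
      · exact continuousOn_of_forall_continuousAt fun t _ => (hg' t).continuousAt
      · intro t _; exact hg' t
      · intro t _; trivial
      · rw [hg0]
    exact key ⟨neg_le_of_abs_le (by linarith [le_abs_self σ, neg_abs_le σ]),
      le_trans (le_abs_self σ) (by linarith)⟩
  -- now transfer properties from g
  have hexp_pos : ∀ σ : ℝ, 0 < t₀ * Real.exp (-(c * σ)) := fun σ =>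
    mul_pos ht₀ (Real.exp_pos _)
  refine ⟨?_, ?_, ?_, ?_⟩
  · intro σ
    rw [heq σ]
    constructor
    · have h1 : Real.arctan (t₀ * Real.exp (-(c * σ))) < π / 2 := Real.arctan_lt_pi_div_two _
      simp only [hgdef]; linarith
    · have h2 : 0 < Real.arctan (t₀ * Real.exp (-(c * σ))) := by
        have := Real.arctan_strictMono (hexp_pos σ)
        rwa [Real.arctan_zero] at this
      simp only [hgdef]; linarith
  · intro σ τ hστ
    rw [heq σ, heq τ]
    simp only [hgdef]
    have : Real.arctan (t₀ * Real.exp (-(c * τ))) < Real.arctan (t₀ * Real.exp (-(c * σ))) := by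
      apply Real.arctan_strictMono
      apply mul_lt_mul_of_pos_left _ ht₀
      exact Real.exp_lt_exp.mpr (by nlinarith)
    linarith
  · have : Tendsto g atTop (nhds ψ₀) := by
      have h1 : Tendsto (fun σ : ℝ => t₀ * Real.exp (-(c * σ))) atTop (nhds 0) := by
        rw [show (0:ℝ) = t₀ * 0 by ring]
        apply Tendsto.const_mul
        apply Real.tendsto_exp_atBot.comp
        have h0 : Tendsto (fun σ : ℝ => c * σ) atTop atTop :=
          (tendsto_const_mul_atTop_of_pos hc).mpr tendsto_id
        exact tendsto_neg_atTop_atBot.comp h0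
      have h2 : Tendsto (fun σ : ℝ => Real.arctan (t₀ * Real.exp (-(c * σ)))) atTop (nhds 0) := by
        have := (Real.continuous_arctan.tendsto 0).comp h1
        rw [Real.arctan_zero] at this
        exact this
      have := (h2.const_mul 2).const_sub ψ₀
      simpa using this
    exact this.congr (fun σ => (heq σ).symm)
  · have : Tendsto g atBot (nhds (ψ₀ - π)) := by
      have h1 : Tendsto (fun σ : ℝ => t₀ * Real.exp (-(c * σ))) atBot atTop := by
        apply Tendsto.const_mul_atTop ht₀
        apply Real.tendsto_exp_atTop.comp
        have : Tendsto (fun σ : ℝ => c * σ) atBot atBot :=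
          (tendsto_const_mul_atBot_of_pos hc).mpr tendsto_id
        exact tendsto_neg_atBot_atTop.comp this
      have h2 : Tendsto (fun σ : ℝ => Real.arctan (t₀ * Real.exp (-(c * σ)))) atBot
          (nhds (π / 2)) :=
        (Real.tendsto_arctan_atTop.mono_right nhdsWithin_le_nhds).comp h1
      have := (h2.const_mul 2).const_sub ψ₀
      have heq2 : ψ₀ - 2 * (π / 2) = ψ₀ - π := by ring
      rw [heq2] at this
      exact this
    exact this.congr (fun σ => (heq σ).symm)
end

section
/- Let R>0, Γ>0, let I ⊂ ℝ be an interval and let θ : I → (0,π), φ : I → ℝ be differentiable functions such that for some constants l, h ∈ ℝ and all t ∈ I: l = R²·sin²θ(t)·φ'(t) (conservation of the spherical angular momentum) and h = (R²/2)·(θ'(t)² + sin²θ(t)·φ'(t)²) + (Γ/(8π))·log(2R²·(1+cos θ(t))) (conservation of energy). If there is a sequence (t_n) in I with θ(t_n) → π (collision with the vortex) or θ(t_n) → 0 (reaching the antipodal point), then l = 0. -/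
open Real Filter

/-- if along a solution on the sphere (with conserved spherical angular
momentum `l = R²·sin²θ·φ'` and conserved energy
`h = (R²/2)(θ'² + sin²θ·φ'²) + (Γ/(8π))·log(2R²(1+cos θ))`) there is a sequence of times
along which the colatitude `θ` tends to `π` (collision with the vortex) or to `0`
(antipodal point), then necessarily `l = 0`. -/
theorem angular_momentum_vanishes_at_collision (R Γ l h : ℝ) (hR : 0 < R) (hΓ : 0 < Γ)
    (I : Set ℝ) (hI : I.OrdConnected)
    (θ φ θd φd : ℝ → ℝ)
    (hrange : ∀ t ∈ I, θ t ∈ Set.Ioo 0 π)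
    (hθ : ∀ t ∈ I, HasDerivAt θ (θd t) t)
    (hφ : ∀ t ∈ I, HasDerivAt φ (φd t) t)
    (hl : ∀ t ∈ I, l = R ^ 2 * Real.sin (θ t) ^ 2 * φd t)
    (hh : ∀ t ∈ I, h = R ^ 2 / 2 * (θd t ^ 2 + Real.sin (θ t) ^ 2 * φd t ^ 2) +
      Γ / (8 * π) * Real.log (2 * R ^ 2 * (1 + Real.cos (θ t))))
    (u : ℕ → ℝ) (hu : ∀ n, u n ∈ I)
    (hlim : Tendsto (fun n => θ (u n)) atTop (nhds π) ∨
      Tendsto (fun n => θ (u n)) atTop (nhds 0)) :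
    l = 0 := by
  set C : ℝ := Γ / (8 * π) with hC
  set g : ℕ → ℝ := fun n =>
    2 * R ^ 2 * Real.sin (θ (u n)) ^ 2 *
      (h - C * Real.log (2 * R ^ 2 * (1 + Real.cos (θ (u n))))) with hg
  -- Step 1: l² ≤ g n for all n
  have key : ∀ n, l ^ 2 ≤ g n := by
    intro n
    have h1 := hh (u n) (hu n)
    have h2 := hl (u n) (hu n)
    simp only [hg]
    rw [h2, h1]
    nlinarith [sq_nonneg (R ^ 2 * Real.sin (θ (u n)) * θd (u n)),
      sq_nonneg (Real.sin (θ (u n)))]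
  -- facts about the range
  have hcos : ∀ n, -1 < Real.cos (θ (u n)) ∧ Real.cos (θ (u n)) < 1 := by
    intro n
    have hr := hrange (u n) (hu n)
    constructor
    · have := Real.cos_lt_cos_of_nonneg_of_le_pi hr.1.le le_rfl hr.2
      simpa using this
    · have := Real.cos_lt_cos_of_nonneg_of_le_pi le_rfl hr.2.le hr.1
      simpa using this
  -- Step 2: g → 0
  have hg0 : Tendsto g atTop (nhds 0) := by
    have hcosθ : Continuous Real.cos := Real.continuous_cos
    rcases hlim with hlim | hlim
    · -- θ → π, cos θ → -1
      have hc : Tendsto (fun n => Real.cos (θ (u n))) atTop (nhds (-1)) := by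
        have := (hcosθ.tendsto π).comp hlim
        simpa [Function.comp_def] using this
      have hx : Tendsto (fun n => 1 + Real.cos (θ (u n))) atTop (nhds 0) := by
        have := (tendsto_const_nhds (x := (1:ℝ))).add hc
        simpa using this
      have hxlog : Tendsto (fun n => (1 + Real.cos (θ (u n))) *
          Real.log (1 + Real.cos (θ (u n)))) atTop (nhds 0) := by
        have := (Real.continuous_mul_log.tendsto 0).comp hx
        simpa [Function.comp_def] using this
      have heq : ∀ n, g n =
          2 * R ^ 2 * (1 - Real.cos (θ (u n))) *
            ((1 + Real.cos (θ (u n))) * (h - C * Real.log (2 * R ^ 2))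
              - C * ((1 + Real.cos (θ (u n))) * Real.log (1 + Real.cos (θ (u n))))) := by
        intro n
        have hpos : 0 < 1 + Real.cos (θ (u n)) := by linarith [(hcos n).1]
        have hR2 : (2 * R ^ 2 : ℝ) ≠ 0 := by positivity
        have hlog : Real.log (2 * R ^ 2 * (1 + Real.cos (θ (u n)))) =
            Real.log (2 * R ^ 2) + Real.log (1 + Real.cos (θ (u n))) :=
          Real.log_mul hR2 (ne_of_gt hpos)
        have hsin : Real.sin (θ (u n)) ^ 2 = 1 - Real.cos (θ (u n)) ^ 2 :=
          Real.sin_sq _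
        simp only [hg, hsin, hlog]
        ring
      rw [show (0:ℝ) = 2 * R ^ 2 * (1 - (-1)) *
          ((0:ℝ) * (h - C * Real.log (2 * R ^ 2)) - C * 0) by ring]
      refine Tendsto.congr (fun n => (heq n).symm) ?_
      refine Tendsto.mul (Tendsto.mul tendsto_const_nhds ?_) ?_
      · have := (tendsto_const_nhds (x := (1:ℝ))).sub hc
        simpa using this
      · exact (hx.mul tendsto_const_nhds).sub (tendsto_const_nhds.mul hxlog)
    · -- θ → 0, cos θ → 1
      have hc : Tendsto (fun n => Real.cos (θ (u n))) atTop (nhds 1) := by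
        have := (hcosθ.tendsto 0).comp hlim
        simpa [Function.comp_def] using this
      have hs : Tendsto (fun n => Real.sin (θ (u n)) ^ 2) atTop (nhds 0) := by
        have : Tendsto (fun n => 1 - Real.cos (θ (u n)) ^ 2) atTop (nhds 0) := by
          have := (tendsto_const_nhds (x := (1:ℝ))).sub ((hc.pow 2))
          simpa using this
        exact this.congr fun n => (Real.sin_sq _).symm
      have harg : Tendsto (fun n => 2 * R ^ 2 * (1 + Real.cos (θ (u n)))) atTop
          (nhds (2 * R ^ 2 * 2)) := by
        have := tendsto_const_nhds (x := (2 * R ^ 2 : ℝ)) |>.mul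
          ((tendsto_const_nhds (x := (1:ℝ))).add hc)
        simpa [show (1:ℝ) + 1 = 2 by norm_num] using this
      have hlog : Tendsto (fun n => Real.log (2 * R ^ 2 * (1 + Real.cos (θ (u n)))))
          atTop (nhds (Real.log (2 * R ^ 2 * 2))) := by
        have hne : (2 * R ^ 2 * 2 : ℝ) ≠ 0 := by positivity
        exact ((Real.continuousAt_log hne).tendsto).comp harg
      rw [show (0:ℝ) = 2 * R ^ 2 * 0 * (h - C * Real.log (2 * R ^ 2 * 2)) by ring]
      exact ((tendsto_const_nhds.mul hs)).mul (tendsto_const_nhds.sub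
        (tendsto_const_nhds.mul hlog))
  -- conclude
  have hle : l ^ 2 ≤ 0 := le_of_tendsto_of_tendsto' tendsto_const_nhds hg0 key
  have : l ^ 2 = 0 := le_antisymm hle (sq_nonneg l)
  exact pow_eq_zero_iff (by norm_num) |>.mp this
end

section
/- Let R>0, Γ>0 and fix θ̄ ∈ (π/2, π). Set p̄ ∈ ℝ with p̄² = −(Γ/(8π))·sin⁴θ̄/(2·cos θ̄·(1+cos θ̄)) (the right-hand side is positive since cos θ̄ < 0). Then for any φ₀ ∈ ℝ the curve γ(t) = (φ(t), θ(t), p_φ(t), p_θ(t)) := (φ₀ + t·p̄/(R²·sin²θ̄), θ̄, p̄, 0) is a solution of the system φ' = p_φ/(R²·sin²θ), θ' = p_θ/R², p_φ' = 0, p_θ' = (cos θ/(R²·sin³θ))·p_φ² + (Γ/(8π))·sin θ/(2R²·(1+cos θ)); hence every vortex-parallel in the vortex half-sphere supports a periodic orbit. Conversely, for θ̄ ∈ (0, π/2] no real p̄ ≠ 0 satisfies (cos θ̄/sin³θ̄)·p̄² + (Γ/(8π))·sin θ̄/(2·(1+cos θ̄)) = 0, so no vortex-parallel in the antivortex half-sphere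 supports such an orbit. -/
open Real

/-- for a vortex-parallel `{θ = θ̄}` in the vortex half-sphere
(`π/2 < θ̄ < π`), with `p̄² = −(Γ/(8π))·sin⁴θ̄/(2 cos θ̄ (1+cos θ̄))`, the curve
`γ(t) = (φ₀ + t·p̄/(R² sin²θ̄), θ̄, p̄, 0)` solves the Hamiltonian system
`φ' = p_φ/(R² sin²θ)`, `θ' = p_θ/R²`, `p_φ' = 0`,
`p_θ' = (cos θ/(R² sin³θ))·p_φ² + (Γ/(8π))·sin θ/(2R²(1+cos θ))`; hence every
vortex-parallel in the vortex half-sphere supports a periodic orbit. Conversely, for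
`θ̄ ∈ (0,π/2]` no real `p̄ ≠ 0` satisfies
`(cos θ̄/sin³θ̄)·p̄² + (Γ/(8π))·sin θ̄/(2(1+cos θ̄)) = 0`, so no vortex-parallel in the
antivortex half-sphere supports such an orbit. -/
theorem vortex_parallel_periodic_orbits (R Γ θb pb φ₀ : ℝ) (hR : 0 < R) (hΓ : 0 < Γ)
    (hθb : θb ∈ Set.Ioo (π / 2) π)
    (hpb : pb ^ 2 =
      -(Γ / (8 * π)) * Real.sin θb ^ 4 / (2 * Real.cos θb * (1 + Real.cos θb))) :
    (∀ t : ℝ,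
      HasDerivAt (fun s => φ₀ + s * pb / (R ^ 2 * Real.sin θb ^ 2))
        (pb / (R ^ 2 * Real.sin θb ^ 2)) t ∧
      HasDerivAt (fun _ : ℝ => θb) ((0 : ℝ) / R ^ 2) t ∧
      HasDerivAt (fun _ : ℝ => pb) 0 t ∧
      HasDerivAt (fun _ : ℝ => (0 : ℝ))
        (Real.cos θb / (R ^ 2 * Real.sin θb ^ 3) * pb ^ 2 +
          Γ / (8 * π) * Real.sin θb / (2 * R ^ 2 * (1 + Real.cos θb))) t) ∧
    (∀ θ p : ℝ, θ ∈ Set.Ioc 0 (π / 2) → p ≠ 0 →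
      Real.cos θ / Real.sin θ ^ 3 * p ^ 2 +
        Γ / (8 * π) * Real.sin θ / (2 * (1 + Real.cos θ)) ≠ 0) := by
  obtain ⟨h1, h2⟩ := hθb
  have hπ : (0:ℝ) < π := Real.pi_pos
  have hsin : 0 < Real.sin θb := Real.sin_pos_of_pos_of_lt_pi (lt_trans (by positivity) h1) h2
  have hcos : Real.cos θb < 0 := by
    have := Real.cos_lt_cos_of_nonneg_of_le_pi (by positivity) (le_of_lt h2) h1
    simpa using lt_of_lt_of_le this (by simp [Real.cos_pi_div_two])
  have hcos1 : -1 < Real.cos θb := by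
    have := Real.cos_lt_cos_of_nonneg_of_le_pi (le_of_lt (lt_trans (by positivity) h1))
      le_rfl h2
    simpa using this
  have h1c : 0 < 1 + Real.cos θb := by linarith
  constructor
  · intro t
    refine ⟨?_, ?_, hasDerivAt_const _ _, ?_⟩
    · have : HasDerivAt (fun s : ℝ => φ₀ + s * pb / (R ^ 2 * Real.sin θb ^ 2))
          (1 * pb / (R ^ 2 * Real.sin θb ^ 2)) t := by
        exact ((hasDerivAt_id t).mul_const pb).div_const _ |>.const_add φ₀
      simpa using this
    · simpa using hasDerivAt_const t θb
    · have hz : Real.cos θb / (R ^ 2 * Real.sin θb ^ 3) * pb ^ 2 +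
          Γ / (8 * π) * Real.sin θb / (2 * R ^ 2 * (1 + Real.cos θb)) = 0 := by
        have hs : Real.sin θb ≠ 0 := ne_of_gt hsin
        have hc : Real.cos θb ≠ 0 := ne_of_lt hcos
        have hc1 : (1 : ℝ) + Real.cos θb ≠ 0 := ne_of_gt h1c
        have hRne : R ≠ 0 := ne_of_gt hR
        have hπne : π ≠ 0 := ne_of_gt hπ
        rw [hpb]
        field_simp
        ring
      rw [hz]
      exact hasDerivAt_const _ _
  · intro θ p hθ hp
    obtain ⟨hθ0, hθ2⟩ := hθ
    have hsθ : 0 < Real.sin θ :=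
      Real.sin_pos_of_pos_of_lt_pi hθ0 (lt_of_le_of_lt hθ2 (by linarith))
    have hcθ : 0 ≤ Real.cos θ := Real.cos_nonneg_of_mem_Icc ⟨by linarith, hθ2⟩
    have h1cθ : 0 < 1 + Real.cos θ := by linarith
    have hpos : 0 < Real.cos θ / Real.sin θ ^ 3 * p ^ 2 +
        Γ / (8 * π) * Real.sin θ / (2 * (1 + Real.cos θ)) := by
      have h1 : 0 ≤ Real.cos θ / Real.sin θ ^ 3 * p ^ 2 := by positivity
      have h2 : 0 < Γ / (8 * π) * Real.sin θ / (2 * (1 + Real.cos θ)) := by positivity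
      linarith
    exact ne_of_gt hpos
end
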